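/- In any tournament T with γ(T) > 1, every minimum closed dominating walk visits each of its vertices exactly once (i.e., no watchman's walk repeats vertices). -/

import Mathlib

variable {V : Type*}

/-- `S` dominates the digraph with arc relation `A`: every vertex is in `S`
or has an in-neighbour in `S`. -/
def Dom (A : V → V → Prop) (S : Set V) : Prop :=
  ∀ v, v ∈ S ∨ ∃ u ∈ S, A u v

/-- `l` (a nonempty list of visited vertices) is a closed directed walk:
consecutive vertices are joined by arcs and there is an arc from the last
vertex back to the first (or the walk is the trivial walk at one vertex). -/
def IsClosedWalk (A : V → V → Prop) (l : List V) : Prop :=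
  l ≠ [] ∧ l.Chain' A ∧
    (l.length = 1 ∨ ∀ a b, l.head? = some a → l.getLast? = some b → A b a)

/-- The length (number of arcs, with multiplicity) of the closed walk with
vertex list `l`. -/
def walkLength (l : List V) : ℕ := if l.length = 1 then 0 else l.length

/-- `l` is a closed dominating walk. -/
def IsCDW (A : V → V → Prop) (l : List V) : Prop :=
  IsClosedWalk A l ∧ Dom A {v | v ∈ l}

/-- The digraph has a closed dominating walk. -/
def HasCDW (A : V → V → Prop) : Prop := ∃ l, IsCDW A l

/-- The watchman number: minimum length of a closed dominating walk. -/
noncomputable def watchman (A : V → V → Prop) : ℕ :=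
  sInf {n | ∃ l, IsCDW A l ∧ walkLength l = n}

/-- A tournament: loopless, and exactly one arc between any two distinct vertices. -/
def IsTournament (A : V → V → Prop) : Prop :=
  (∀ v, ¬ A v v) ∧ ∀ u v : V, u ≠ v → (A u v ↔ ¬ A v u)

/-- The subdigraph induced on `S` is strongly connected. -/
def StronglyConnectedOn (A : V → V → Prop) (S : Set V) : Prop :=
  ∀ u ∈ S, ∀ v ∈ S, Relation.ReflTransGen (fun a b => a ∈ S ∧ b ∈ S ∧ A a b) u v

/-- The maximal strongly connected component containing `v`. -/
def StrongComp (A : V → V → Prop) (v : V) : Set V :=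
  {u | Relation.ReflTransGen A v u ∧ Relation.ReflTransGen A u v}

/-- The domination number. -/
noncomputable def domNum (A : V → V → Prop) : ℕ :=
  sInf {n | ∃ S : Set V, S.ncard = n ∧ Dom A S}

/-- The total domination number. -/
noncomputable def totalDomNum (A : V → V → Prop) : ℕ :=
  sInf {n | ∃ S : Set V, S.ncard = n ∧ ∀ v, ∃ u ∈ S, u ≠ v ∧ A u v}

/-- An orientation of a complete multipartite graph whose parts are the fibres
of `P`: arcs only between different parts, and exactly one arc between any two
vertices in different parts. -/
def IsCMPOrientation {ι : Type*} (A : V → V → Prop) (P : V → ι) : Prop :=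
  (∀ u v, A u v → P u ≠ P v) ∧ ∀ u v, P u ≠ P v → (A u v ↔ ¬ A v u)

section AuxWW
variable {A : V → V → Prop}




lemma tourn_asymm (hT : IsTournament A) {u v : V} (h1 : A u v) (h2 : A v u) : False := by
  by_cases h : u = v
  · exact hT.1 u (h ▸ h1)
  · exact ((hT.2 u v h).mp h1) h2

lemma tourn_total (hT : IsTournament A) {u v : V} (h : u ≠ v) : A u v ∨ A v u := by
  by_cases h1 : A v u
  · exact Or.inr h1
  · exact Or.inl ((hT.2 u v h).mpr h1)

/-- relation restricted to a finset -/
def relOn (A : V → V → Prop) (S : Finset V) : V → V → Prop :=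
  fun x y => x ∈ S ∧ y ∈ S ∧ A x y

lemma chain_mem_of_relOn {S : Finset V} :
    ∀ {a : V} {l : List V}, List.Chain (relOn A S) a l → ∀ x ∈ l, x ∈ S
  | _, [], _, x, hx => by simp at hx
  | a, b :: l, h, x, hx => by
    rcases List.chain_cons.mp h with ⟨hab, hl⟩
    rcases List.mem_cons.mp hx with rfl | hx'
    · exact hab.2.1
    · exact chain_mem_of_relOn hl x hx'

lemma chain_relOn_of_chain {S : Finset V} :
    ∀ {a : V} {l : List V}, List.Chain A a l → a ∈ S → (∀ x ∈ l, x ∈ S) →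
      List.Chain (relOn A S) a l
  | _, [], _, _, _ => List.Chain.nil
  | a, b :: l, h, ha, hmem => by
    rcases List.chain_cons.mp h with ⟨hab, hl⟩
    have hb : b ∈ S := hmem b (by simp)
    exact List.chain_cons.mpr ⟨⟨ha, hb, hab⟩,
      chain_relOn_of_chain hl hb (fun x hx => hmem x (by simp [hx]))⟩

lemma chain_head_reaches {r : V → V → Prop} :
    ∀ {a : V} {l : List V}, List.Chain r a l → ∀ w ∈ a :: l, Relation.ReflTransGen r a w
  | _, [], _, w, hw => by
    simp only [List.mem_singleton] at hw
    exact hw ▸ Relation.ReflTransGen.refl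
  | a, b :: l, h, w, hw => by
    rcases List.chain_cons.mp h with ⟨hab, hl⟩
    rcases List.mem_cons.mp hw with rfl | hw'
    · exact Relation.ReflTransGen.refl
    · exact Relation.ReflTransGen.head hab (chain_head_reaches hl w hw')

lemma chain_reaches_start {r : V → V → Prop} {a : V} {t : List V}
    (h : List.Chain r a (t ++ [a])) : ∀ u ∈ a :: t, Relation.ReflTransGen r u a := by
  intro u hu
  rcases List.mem_cons.mp hu with rfl | hu'
  · exact Relation.ReflTransGen.refl
  · obtain ⟨p, q, rfl⟩ := List.append_of_mem hu'
    have h' : List.Chain r a (p ++ u :: (q ++ [a])) := by simpa using h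
    exact chain_head_reaches (List.isChain_cons_split.mp h').2 a (by simp)

lemma chain_concat_iff : ∀ {a b : V} {t : List V},
    List.Chain A a (t ++ [b]) ↔
      List.Chain A a t ∧ A ((a :: t).getLast (List.cons_ne_nil a t)) b
  | a, b, [] => by simp [List.Chain]
  | a, b, c :: t => by
    have ih := chain_concat_iff (a := c) (b := b) (t := t)
    rw [List.cons_append]
    simp only [List.Chain] at ih ⊢
    rw [List.chain_cons, List.chain_cons, ih,
      List.getLast_cons (List.cons_ne_nil c t)]
    tauto

lemma chain_append_chain {r : V → V → Prop} :
    ∀ {a : V} {l₁ l₂ : List V}, List.Chain r a l₁ →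
      List.Chain r ((a :: l₁).getLast (List.cons_ne_nil a l₁)) l₂ →
      List.Chain r a (l₁ ++ l₂)
  | _, [], _, _, h2 => h2
  | a, b :: l, l₂, h1, h2 => by
    rcases List.chain_cons.mp h1 with ⟨hab, hl⟩
    rw [List.getLast_cons (List.cons_ne_nil b l)] at h2
    exact List.chain_cons.mpr ⟨hab, chain_append_chain hl h2⟩

lemma dup_decomp : ∀ {l : List V}, ¬ l.Nodup →
    ∃ (p : List V) (x : V) (q r : List V), l = p ++ x :: q ++ x :: r
  | [], h => absurd List.nodup_nil h
  | b :: l, h => by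
    rw [List.nodup_cons] at h
    push_neg at h
    by_cases hb : b ∈ l
    · obtain ⟨q, r, rfl⟩ := List.append_of_mem hb
      exact ⟨[], b, q, r, rfl⟩
    · obtain ⟨p, x, q, r, rfl⟩ := dup_decomp (h hb)
      exact ⟨b :: p, x, q, r, rfl⟩


-- extraction of a nodup cycle from a closed walk
lemma extract_cycle {S : Finset V} : ∀ (n : ℕ) (a : V) (t : List V), (a :: t).length ≤ n →
    List.Chain A a (t ++ [a]) → (∀ x ∈ a :: t, x ∈ S) →
    ∃ (b : V) (s : List V), List.Chain A b (s ++ [b]) ∧ (b :: s).Nodup ∧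
      ∀ x ∈ b :: s, x ∈ S := by
  intro n
  induction n with
  | zero => intro a t hlen _ _; simp at hlen
  | succ n ih =>
    intro a t hlen hc hmem
    by_cases hnd : (a :: t).Nodup
    · exact ⟨a, t, hc, hnd, hmem⟩
    · obtain ⟨p, x, q, r, hdec⟩ := dup_decomp hnd
      cases p with
      | nil =>
        simp only [List.nil_append, List.cons.injEq] at hdec
        obtain ⟨rfl, rfl⟩ := hdec
        have hc' : List.Chain A a (q ++ a :: (r ++ [a])) := by simpa using hc
        have h1 : List.Chain A a (q ++ [a]) := (List.isChain_cons_split.mp hc').1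
        apply ih a q _ h1
        · intro y hy
          apply hmem
          rcases List.mem_cons.mp hy with rfl | hy'
          · simp
          · simp [hy']
        · have := hlen
          simp at this ⊢
          omega
      | cons c p' =>
        simp only [List.cons_append, List.cons.injEq] at hdec
        obtain ⟨rfl, rfl⟩ := hdec
        have hc' : List.Chain A a (p' ++ x :: (q ++ x :: (r ++ [a]))) := by simpa using hc
        have h2 : List.Chain A x (q ++ x :: (r ++ [a])) := (List.isChain_cons_split.mp hc').2
        have h21 : List.Chain A x (q ++ [x]) := (List.isChain_cons_split.mp h2).1
        apply ih x q _ h21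
        · intro y hy
          apply hmem
          rcases List.mem_cons.mp hy with rfl | hy'
          · simp
          · simp [hy']
        · have := hlen
          simp at this ⊢
          omega

lemma insert_into_chain (hT : IsTournament A) (u : V) :
    ∀ (a : V) (l : List V), List.Chain A a l → A a u → u ∉ l → (∃ y ∈ l, A u y) →
    ∃ (l₁ : List V) (y : V) (l₂ : List V), l = l₁ ++ y :: l₂ ∧
      List.Chain A a (l₁ ++ u :: y :: l₂)
  | _, [], _, _, _, hy => by simp at hy
  | a, b :: l, hc, hau, hul, hy => by
    rcases List.chain_cons.mp hc with ⟨hab, hl⟩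
    by_cases hub : A u b
    · exact ⟨[], b, l, rfl, List.chain_cons.mpr ⟨hau, List.chain_cons.mpr ⟨hub, hl⟩⟩⟩
    · have hbu : A b u :=
        (tourn_total hT (show b ≠ u by rintro rfl; exact hul (List.mem_cons_self))).resolve_right hub
      have hy' : ∃ y ∈ l, A u y := by
        obtain ⟨y, hyl, hy2⟩ := hy
        rcases List.mem_cons.mp hyl with rfl | h
        · exact absurd hy2 hub
        · exact ⟨y, h, hy2⟩
      obtain ⟨l₁, y, l₂, rfl, hc'⟩ :=
        insert_into_chain hT u b l hl hbu (fun h => hul (List.mem_cons_of_mem _ h)) hy'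
      exact ⟨b :: l₁, y, l₂, rfl, List.chain_cons.mpr ⟨hab, hc'⟩⟩

lemma rotate_chain {a x : V} {p q : List V} (h : List.Chain A a ((p ++ x :: q) ++ [a])) :
    List.Chain A x ((q ++ a :: p) ++ [x]) := by
  have h' : List.Chain A a (p ++ x :: (q ++ [a])) := by simpa using h
  obtain ⟨h1, h2⟩ := List.isChain_cons_split.mp h'
  have h3 : List.Chain A x (q ++ a :: (p ++ [x])) := List.isChain_cons_split.mpr ⟨h2, h1⟩
  simpa using h3

lemma rotate_perm (a x : V) (p q : List V) : (x :: (q ++ a :: p)).Perm (a :: (p ++ x :: q)) :=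
  (List.Perm.cons x List.perm_middle).trans <|
    (List.Perm.cons x (List.Perm.cons a List.perm_append_comm)).trans <|
      (List.Perm.swap a x _).trans (List.Perm.cons a List.perm_middle.symm)

lemma cycle_rotate {a x : V} {t : List V} (hc : List.Chain A a (t ++ [a]))
    (hx : x ∈ a :: t) :
    ∃ s : List V, List.Chain A x (s ++ [x]) ∧ (x :: s).Perm (a :: t) := by
  obtain ⟨p, q, hpq⟩ := List.append_of_mem hx
  cases p with
  | nil =>
    simp only [List.nil_append, List.cons.injEq] at hpq
    obtain ⟨rfl, rfl⟩ := hpq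
    exact ⟨t, hc, List.Perm.refl _⟩
  | cons c p' =>
    simp only [List.cons_append, List.cons.injEq] at hpq
    obtain ⟨rfl, rfl⟩ := hpq
    exact ⟨q ++ a :: p', rotate_chain hc, rotate_perm a x p' q⟩

lemma extend_cycle (hT : IsTournament A) {S : Finset V}
    (hstr : ∀ u ∈ S, ∀ w ∈ S, Relation.ReflTransGen (relOn A S) u w)
    {a : V} {t : List V} (hc : List.Chain A a (t ++ [a])) (hnd : (a :: t).Nodup)
    (hmem : ∀ x ∈ a :: t, x ∈ S) {u : V} (hu : u ∈ S) (hout : u ∉ a :: t) :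
    ∃ (b : V) (s : List V), List.Chain A b (s ++ [b]) ∧ (b :: s).Nodup ∧
      (∀ x ∈ b :: s, x ∈ S) ∧ (a :: t).length < (b :: s).length := by
  by_cases hmixed : ∃ w, w ∈ S ∧ w ∉ a :: t ∧ (∃ x ∈ a :: t, A x w) ∧ (∃ y ∈ a :: t, A w y)
  · -- insertion case
    obtain ⟨w, hwS, hwout, ⟨x, hxC, hxw⟩, ⟨y, hyC, hwy⟩⟩ := hmixed
    obtain ⟨s, hcs, hperm⟩ := cycle_rotate hc hxC
    have hwout' : w ∉ x :: s := fun h => hwout (hperm.mem_iff.mp h)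
    have hwx : w ≠ x := fun h => hwout (h ▸ hxC)
    have hynx : y ≠ x := by
      rintro rfl
      exact tourn_asymm hT hxw hwy
    have hys : y ∈ s := by
      have : y ∈ x :: s := hperm.mem_iff.mpr hyC
      rcases List.mem_cons.mp this with h | h
      · exact absurd h hynx
      · exact h
    obtain ⟨l₁, y', l₂, heq, hcins⟩ := insert_into_chain hT w x (s ++ [x]) hcs hxw
      (by
        intro h
        rcases List.mem_append.mp h with h | h
        · exact hwout' (List.mem_cons_of_mem _ h)
        · exact hwx (List.mem_singleton.mp h))
      ⟨y, List.mem_append_left _ hys, hwy⟩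
    -- the inserted spot is not at the very end
    rcases List.eq_nil_or_concat l₂ with rfl | ⟨l₂', z, rfl⟩
    · exfalso
      have hgl : ((s ++ [x]).getLast?) = some y' := by
        rw [heq]
        exact List.getLast?_concat
      rw [List.getLast?_concat] at hgl
      have hyx : x = y' := Option.some.inj hgl
      have hwyx : A w y' := (List.chain_cons.mp (List.isChain_cons_split.mp hcins).2).1
      rw [← hyx] at hwyx
      exact tourn_asymm hT hxw hwyx
    · rw [List.concat_eq_append] at heq hcins
      have hz : x = z := by
        have h1 : ((s ++ [x]).getLast?) = some x := List.getLast?_concat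
        rw [heq] at h1
        have h2 : (l₁ ++ y' :: (l₂' ++ [z])).getLast? = some z := by
          rw [show l₁ ++ y' :: (l₂' ++ [z]) = (l₁ ++ y' :: l₂') ++ [z] by simp]
          exact List.getLast?_concat
        rw [h2] at h1
        exact (Option.some.inj h1).symm
      subst hz
      have hseq : s = l₁ ++ y' :: l₂' := by
        apply List.append_cancel_right (bs := [x])
        rw [heq]; simp
      have hndxs : (x :: s).Nodup := List.Perm.nodup hperm.symm hnd
      have hpnew : (x :: (l₁ ++ w :: y' :: l₂')).Perm (w :: x :: s) := by
        rw [hseq]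
        exact (List.Perm.cons x List.perm_middle).trans (List.Perm.swap w x _)
      refine ⟨x, l₁ ++ w :: y' :: l₂', ?_, ?_, ?_, ?_⟩
      · have hch : List.Chain A x (l₁ ++ w :: y' :: (l₂' ++ [x])) := by simpa using hcins
        have hgoal : List.Chain A x ((l₁ ++ w :: y' :: l₂') ++ [x]) := by simpa using hch
        exact hgoal
      · exact List.Perm.nodup hpnew.symm (List.nodup_cons.mpr ⟨hwout', hndxs⟩)
      · intro v hv
        have hv' : v ∈ w :: x :: s := hpnew.mem_iff.mp hv
        rcases List.mem_cons.mp hv' with rfl | hv''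
        · exact hwS
        · exact hmem v (hperm.mem_iff.mp hv'')
      · have h1 : (x :: s).length = (a :: t).length := hperm.length_eq
        have h2 : s.length = l₁.length + l₂'.length + 1 := by rw [hseq]; simp only [List.length_append, List.length_cons]; omega
        simp only [List.length_cons, List.length_append] at h1 ⊢
        omega
  · -- W/Z case
    have hsplit : ∀ w ∈ S, w ∉ a :: t →
        (∀ x ∈ a :: t, A w x) ∨ (∀ x ∈ a :: t, A x w) := by
      intro w hwS hwout
      by_contra hcon
      push_neg at hcon
      obtain ⟨⟨x, hx, hwx⟩, ⟨y, hy, hyw⟩⟩ := hcon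
      have hxw : A x w := (tourn_total hT (show x ≠ w from fun h => hwout (h ▸ hx))).resolve_right hwx
      have hwy : A w y := (tourn_total hT (show w ≠ y from fun h => hwout (h.symm ▸ hy))).resolve_right hyw
      exact hmixed ⟨w, hwS, hwout, ⟨x, hx, hxw⟩, ⟨y, hy, hwy⟩⟩
    have haS : a ∈ S := hmem a (by simp)
    have key : ∃ z w, (z ∈ S ∧ z ∉ a :: t ∧ ∀ x ∈ a :: t, A x z) ∧
        (w ∈ S ∧ w ∉ a :: t ∧ ∀ x ∈ a :: t, A w x) ∧ A z w := by
      by_contra hno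
      rcases hsplit u hu hout with hWu | hZu
      · -- u beats all of C; reachability from a stays in C ∪ Z
        have hP : ∀ y, Relation.ReflTransGen (relOn A S) a y →
            (y ∈ a :: t ∨ (y ∈ S ∧ y ∉ a :: t ∧ ∀ x ∈ a :: t, A x y)) := by
          intro y hy
          induction hy with
          | refl => exact Or.inl (by simp)
          | @tail b c hab hbc ih =>
            obtain ⟨hbS, hcS, hA⟩ := hbc
            by_cases hcC : c ∈ a :: t
            · exact Or.inl hcC
            · rcases hsplit c hcS hcC with hcW | hcZ
              · rcases ih with hC | hZb
                · exact absurd (hcW b hC) (fun h => tourn_asymm hT hA h)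
                · exact absurd ⟨b, c, hZb, ⟨hcS, hcC, hcW⟩, hA⟩ hno
              · exact Or.inr ⟨hcS, hcC, hcZ⟩
        rcases hP u (hstr a haS u hu) with h | h
        · exact hout h
        · exact tourn_asymm hT (hWu a (by simp)) (h.2.2 a (by simp))
      · -- u beaten by all of C; reachability from u stays in Z
        have hP : ∀ y, Relation.ReflTransGen (relOn A S) u y →
            (y ∈ S ∧ y ∉ a :: t ∧ ∀ x ∈ a :: t, A x y) := by
          intro y hy
          induction hy with
          | refl => exact ⟨hu, hout, hZu⟩
          | @tail b c hab hbc ih =>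
            obtain ⟨hbS, hcS, hA⟩ := hbc
            by_cases hcC : c ∈ a :: t
            · exact absurd hA (fun h => tourn_asymm hT h (ih.2.2 c hcC))
            · rcases hsplit c hcS hcC with hcW | hcZ
              · exact absurd ⟨b, c, ih, ⟨hcS, hcC, hcW⟩, hA⟩ hno
              · exact ⟨hcS, hcC, hcZ⟩
        exact (hP a (hstr u hu a haS)).2.1 (by simp)
    obtain ⟨z, w, ⟨hzS, hzout, hzin⟩, ⟨hwS, hwout, hwall⟩, hzw⟩ := key
    cases t with
    | nil =>
      exfalso
      have : A a a := (List.chain_cons.mp hc).1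
      exact hT.1 a this
    | cons b₀ t' =>
      rcases List.chain_cons.mp hc with ⟨hab₀, hrest⟩
      have hznw : z ≠ w := by rintro rfl; exact hT.1 z hzw
      refine ⟨a, z :: w :: b₀ :: t', ?_, ?_, ?_, ?_⟩
      · refine List.chain_cons.mpr ⟨hzin a (by simp), List.chain_cons.mpr ⟨hzw,
          List.chain_cons.mpr ⟨hwall b₀ (by simp), hrest⟩⟩⟩
      · have hnd' := hnd
        simp only [List.nodup_cons, List.mem_cons] at hnd' ⊢
        push_neg at hnd' ⊢
        refine ⟨⟨?_, ?_, hnd'.1⟩, ⟨?_, ?_, ?_⟩, ?_, hnd'.2⟩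
        · rintro rfl; exact hzout (by simp)
        · rintro rfl; exact hwout (by simp)
        · exact hznw
        · rintro rfl; exact hzout (by simp)
        · intro h; exact hzout (by simp [h])
        · constructor
          · rintro rfl; exact hwout (by simp)
          · intro h; exact hwout (by simp [h])
      · intro y hy
        rcases List.mem_cons.mp hy with rfl | hy
        · exact haS
        rcases List.mem_cons.mp hy with rfl | hy
        · exact hzS
        rcases List.mem_cons.mp hy with rfl | hy
        · exact hwS
        · exact hmem y (by simp [List.mem_cons.mp hy])
      · simp


lemma grow_cycle (hT : IsTournament A) {S : Finset V}
    (hstr : ∀ u ∈ S, ∀ w ∈ S, Relation.ReflTransGen (relOn A S) u w) :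
    ∀ (n : ℕ) (a : V) (t : List V), List.Chain A a (t ++ [a]) → (a :: t).Nodup →
    (∀ x ∈ a :: t, x ∈ S) → S.card ≤ (a :: t).length + n →
    ∃ (b : V) (s : List V), List.Chain A b (s ++ [b]) ∧ (b :: s).Nodup ∧
      ∀ x, x ∈ b :: s ↔ x ∈ S := by
  intro n
  induction n with
  | zero =>
    intro a t hc hnd hmem hcard
    classical
    have hsub : (a :: t).toFinset ⊆ S := fun x hx => hmem x (List.mem_toFinset.mp hx)
    have hlen : (a :: t).toFinset.card = (a :: t).length := List.toFinset_card_of_nodup hnd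
    have heq : (a :: t).toFinset = S :=
      Finset.eq_of_subset_of_card_le hsub (by omega)
    refine ⟨a, t, hc, hnd, fun x => ⟨fun h => hmem x h, fun h => ?_⟩⟩
    rw [← heq] at h
    exact List.mem_toFinset.mp h
  | succ n ih =>
    intro a t hc hnd hmem hcard
    by_cases hex : ∃ u ∈ S, u ∉ a :: t
    · obtain ⟨u, hu, hout⟩ := hex
      obtain ⟨b, s, hc', hnd', hmem', hlen⟩ := extend_cycle hT hstr hc hnd hmem hu hout
      exact ih b s hc' hnd' hmem' (by omega)
    · push_neg at hex
      exact ⟨a, t, hc, hnd, fun x => ⟨fun h => hmem x h, fun h => hex x h⟩⟩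

lemma seed_cycle {S : Finset V}
    (hstr : ∀ u ∈ S, ∀ w ∈ S, Relation.ReflTransGen (relOn A S) u w)
    {u w : V} (hu : u ∈ S) (hw : w ∈ S) (hne : u ≠ w) :
    ∃ (b : V) (s : List V), List.Chain A b (s ++ [b]) ∧ (b :: s).Nodup ∧
      ∀ x ∈ b :: s, x ∈ S := by
  obtain ⟨l₁, hl₁, hlast₁⟩ := List.exists_isChain_cons_of_relationReflTransGen (hstr u hu w hw)
  obtain ⟨l₂, hl₂, hlast₂⟩ := List.exists_isChain_cons_of_relationReflTransGen (hstr w hw u hu)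
  have hl₂ne : l₂ ≠ [] := by
    rintro rfl
    exact hne (by simpa using hlast₂.symm)
  have hcat : List.Chain (relOn A S) u (l₁ ++ l₂) := by
    apply chain_append_chain hl₁
    rw [hlast₁]; exact hl₂
  have hLne : l₁ ++ l₂ ≠ [] := fun h => hl₂ne (by simpa using (List.append_eq_nil_iff.mp h).2
    )
  have hlastL : (l₁ ++ l₂).getLast hLne = u := by
    rw [List.getLast_append_of_right_ne_nil l₁ l₂ hl₂ne]
    have := hlast₂
    rwa [List.getLast_cons hl₂ne] at this
  have hdec : (l₁ ++ l₂).dropLast ++ [u] = l₁ ++ l₂ := by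
    conv_rhs => rw [← List.dropLast_append_getLast hLne]
    rw [hlastL]
  set t₀ := (l₁ ++ l₂).dropLast with ht₀
  have hchain : List.Chain (relOn A S) u (t₀ ++ [u]) := by rw [hdec]; exact hcat
  have hchainA : List.Chain A u (t₀ ++ [u]) := List.Chain.imp (fun x y h => h.2.2) hchain
  have hmem : ∀ x ∈ u :: t₀, x ∈ S := by
    intro x hx
    rcases List.mem_cons.mp hx with rfl | hx'
    · exact hu
    · exact chain_mem_of_relOn hcat x ((List.dropLast_sublist (l₁ ++ l₂)).mem hx')
  exact extract_cycle (u :: t₀).length u t₀ le_rfl hchainA hmem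

lemma closed_walk_strong {a : V} {t : List V} (hCW : List.Chain A a (t ++ [a]))
    {S : Finset V} (hS : ∀ x, x ∈ S ↔ x ∈ a :: t) :
    ∀ u ∈ S, ∀ w ∈ S, Relation.ReflTransGen (relOn A S) u w := by
  have hR : List.Chain (relOn A S) a (t ++ [a]) := by
    apply chain_relOn_of_chain hCW ((hS a).mpr (by simp))
    intro x hx
    apply (hS x).mpr
    rcases List.mem_append.mp hx with h | h
    · exact List.mem_cons_of_mem _ h
    · simp [List.mem_singleton.mp h]
  intro u hu w hw
  have h1 : Relation.ReflTransGen (relOn A S) u a :=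
    chain_reaches_start hR u ((hS u).mp hu)
  have h2 : Relation.ReflTransGen (relOn A S) a w := by
    apply chain_head_reaches hR
    have := (hS w).mp hw
    rcases List.mem_cons.mp this with rfl | h
    · simp
    · exact List.mem_cons_of_mem _ (List.mem_append_left _ h)
  exact h1.trans h2


end AuxWW

theorem stmt14 [Fintype V] (A : V → V → Prop) (hT : IsTournament A)
    (hγ : 1 < domNum A) :
    ∀ l, IsCDW A l → walkLength l = watchman A → l.Nodup := by
  intro l hcdw hmin
  by_contra hnd
  obtain ⟨⟨hne, hch, hcl⟩, hdom⟩ := hcdw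
  classical
  rcases l with _ | ⟨a, t⟩
  · exact hne rfl
  rcases t with _ | ⟨b, t'⟩
  · exact hnd (List.nodup_singleton a)
  have hlen1 : (a :: b :: t').length ≠ 1 := by simp
  have hcl' := hcl.resolve_left hlen1
  have closing : A ((a :: b :: t').getLast (by simp)) a :=
    hcl' a _ rfl (List.getLast?_eq_getLast (by simp))
  have hch' : List.Chain A a (b :: t') := hch
  have hCW : List.Chain A a ((b :: t') ++ [a]) := chain_concat_iff.mpr ⟨hch', closing⟩
  set S : Finset V := (a :: b :: t').toFinset with hSdef
  have hS : ∀ x, x ∈ S ↔ x ∈ a :: b :: t' := fun x => List.mem_toFinset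
  have hstr := closed_walk_strong hCW hS
  have hab : a ≠ b := by
    intro h
    exact hT.1 a (h ▸ (List.chain_cons.mp hch').1)
  obtain ⟨c, s, hc, hndc, hmemc⟩ :=
    seed_cycle hstr ((hS a).mpr (by simp)) ((hS b).mpr (by simp)) hab
  obtain ⟨d, s', hcd, hndd, hiff⟩ :=
    grow_cycle hT hstr S.card c s hc hndc hmemc (Nat.le_add_left _ _)
  have hs'ne : s' ≠ [] := by
    rintro rfl
    exact hT.1 d (by simpa [List.Chain] using hcd)
  have hsplitc := chain_concat_iff.mp hcd
  have hCW2 : IsClosedWalk A (d :: s') := by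
    refine ⟨by simp, hsplitc.1, Or.inr ?_⟩
    intro x y hx hy
    have hx' : x = d := by
      simp only [List.head?_cons, Option.some.injEq] at hx
      exact hx.symm
    have hy' : y = (d :: s').getLast (by simp) := by
      rw [List.getLast?_eq_getLast (by simp)] at hy
      exact (Option.some.inj hy).symm
    subst hx'
    rw [hy']
    exact hsplitc.2
  have hset : {v | v ∈ d :: s'} = {v | v ∈ a :: b :: t'} := by
    ext x
    simp only [Set.mem_setOf_eq]
    rw [← hS x]
    exact hiff x
  have hCDW2 : IsCDW A (d :: s') := ⟨hCW2, by rw [hset]; exact hdom⟩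
  have hpos : 0 < s'.length := List.length_pos_iff.mpr hs'ne
  have hlen2 : (d :: s').length ≠ 1 := by
    simp only [List.length_cons]
    omega
  have hwalk2 : walkLength (d :: s') = (d :: s').length := by
    rw [walkLength, if_neg hlen2]
  have hcard2 : (d :: s').length = S.card := by
    rw [← List.toFinset_card_of_nodup hndd]
    congr 1
    ext x
    rw [List.mem_toFinset, hiff x]
  have hcard_lt : S.card < (a :: b :: t').length := by
    have h1 : S.card = (a :: b :: t').dedup.length := List.card_toFinset _
    have h2 : List.Sublist (a :: b :: t').dedup (a :: b :: t') := List.dedup_sublist _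
    have h3 := h2.length_le
    rcases lt_or_eq_of_le h3 with h | h
    · omega
    · exact absurd (List.dedup_eq_self.mp (h2.eq_of_length h)) hnd
  have hwm : watchman A ≤ walkLength (d :: s') := Nat.sInf_le ⟨d :: s', hCDW2, rfl⟩
  have hwl : walkLength (a :: b :: t') = (a :: b :: t').length := by
    rw [walkLength, if_neg hlen1]
  rw [hwl] at hmin
  omega
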